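/- Let Q be a finitely generated group, A a ℤQ-module generated by a finite set 𝒜, χ: Q → ℝ a nonzero character, and r ≥ 0. If there is a matrix (λ_{a,a₁}) indexed by 𝒜 × 𝒜 with entries in ℤQ_χ satisfying a₁ = Σ_{a ∈ 𝒜} a·λ_{a,a₁} for every a₁ ∈ 𝒜 and v_χ(λ_{a,a₁}) > r for all pairs, then A is generated by 𝒜 as a module over the monoid ring ℤQ_χ. -/

import Mathlib

def fgOver {Q : Type*} [Group Q] (M : Set Q) (A : Type*) [AddCommGroup A]
    [Module (MonoidAlgebra ℤ Q) A] : Prop :=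
  ∃ S : Finset A, AddSubgroup.closure
    {x : A | ∃ s ∈ S, ∃ q ∈ M, x = (MonoidAlgebra.single q (1:ℤ) : MonoidAlgebra ℤ Q) • s} = ⊤

open Classical in
noncomputable def vchi {Q : Type*} (χ : Q → ℝ) (lam : MonoidAlgebra ℤ Q) : WithTop ℝ :=
  if h : lam = 0 then ⊤
  else ((lam.coeff.support.inf' (Finsupp.support_nonempty_iff.mpr (fun h' => h (MonoidAlgebra.ext (by rw [h']; rfl)))) χ : ℝ) : WithTop ℝ)

theorem stmt11 {Q : Type*} [Group Q] (hQ : Group.FG Q)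
    (A : Type*) [AddCommGroup A] [Module (MonoidAlgebra ℤ Q) A]
    (𝒜 : Finset A) (hgen : Submodule.span (MonoidAlgebra ℤ Q) (𝒜 : Set A) = ⊤)
    (χ : Q → ℝ) (hhom : ∀ a b : Q, χ (a * b) = χ a + χ b) (hne : χ ≠ 0)
    (r : ℝ) (hr : 0 ≤ r)
    (lam : A → A → MonoidAlgebra ℤ Q)
    (hsupp : ∀ a ∈ 𝒜, ∀ a₁ ∈ 𝒜, ∀ q ∈ (lam a a₁).coeff.support, 0 ≤ χ q)
    (heq : ∀ a₁ ∈ 𝒜, a₁ = ∑ a ∈ 𝒜, lam a a₁ • a)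
    (hval : ∀ a ∈ 𝒜, ∀ a₁ ∈ 𝒜, (r : WithTop ℝ) < vchi χ (lam a a₁)) :
    AddSubgroup.closure
      {x : A | ∃ s ∈ 𝒜, ∃ q : Q, 0 ≤ χ q ∧
        x = (MonoidAlgebra.single q (1:ℤ) : MonoidAlgebra ℤ Q) • s} = ⊤ := by
  classical
  set H := AddSubgroup.closure
      {x : A | ∃ s ∈ 𝒜, ∃ q : Q, 0 ≤ χ q ∧
        x = (MonoidAlgebra.single q (1:ℤ) : MonoidAlgebra ℤ Q) • s} with hH
  have hpos : ∀ a ∈ 𝒜, ∀ a₁ ∈ 𝒜, ∀ q ∈ (lam a a₁).coeff.support, r < χ q := by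
    intro a ha a₁ ha₁ q hq
    have h0 : lam a a₁ ≠ 0 := fun h => by simp [h] at hq
    have hv := hval a ha a₁ ha₁
    rw [vchi, dif_neg h0] at hv
    have hv' : r < (lam a a₁).coeff.support.inf' ⟨q, hq⟩ χ :=
      WithTop.coe_lt_coe.mp hv
    exact lt_of_lt_of_le hv' (Finset.inf'_le _ hq)
  obtain ⟨ε, hε0, hεle⟩ : ∃ ε : ℝ, 0 < ε ∧
      ∀ a ∈ 𝒜, ∀ a₁ ∈ 𝒜, ∀ q ∈ (lam a a₁).coeff.support, ε ≤ χ q := by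
    set T : Finset ℝ := (𝒜 ×ˢ 𝒜).biUnion (fun p => (lam p.1 p.2).coeff.support.image χ) with hT
    by_cases hTne : T.Nonempty
    · refine ⟨T.min' hTne, ?_, ?_⟩
      · obtain ⟨p, hp, hq⟩ := Finset.mem_biUnion.mp (T.min'_mem hTne)
        obtain ⟨q, hq', hqe⟩ := Finset.mem_image.mp hq
        obtain ⟨hp1, hp2⟩ := Finset.mem_product.mp hp
        rw [← hqe]
        exact lt_of_le_of_lt hr (hpos p.1 hp1 p.2 hp2 q hq')
      · intro a ha a₁ ha₁ q hq
        exact T.min'_le (χ q) (Finset.mem_biUnion.mpr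
          ⟨(a, a₁), Finset.mem_product.mpr ⟨ha, ha₁⟩, Finset.mem_image_of_mem χ hq⟩)
    · refine ⟨1, one_pos, fun a ha a₁ ha₁ q hq => absurd ?_ hTne⟩
      exact ⟨χ q, Finset.mem_biUnion.mpr
        ⟨(a, a₁), Finset.mem_product.mpr ⟨ha, ha₁⟩, Finset.mem_image_of_mem χ hq⟩⟩
  have hgenmem : ∀ a ∈ 𝒜, ∀ q : Q, 0 ≤ χ q →
      (MonoidAlgebra.single q (1:ℤ) : MonoidAlgebra ℤ Q) • a ∈ H :=
    fun a ha q hq => AddSubgroup.subset_closure ⟨a, ha, q, hq, rfl⟩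
  have key : ∀ n : ℕ, ∀ q : Q, -((n:ℝ) * ε) ≤ χ q → ∀ a ∈ 𝒜,
      (MonoidAlgebra.single q (1:ℤ) : MonoidAlgebra ℤ Q) • a ∈ H := by
    intro n
    induction n with
    | zero => intro q hq a ha; exact hgenmem a ha q (by simpa using hq)
    | succ n ih =>
      intro q hq a ha
      by_cases h0 : 0 ≤ χ q
      · exact hgenmem a ha q h0
      · rw [show a = ∑ a' ∈ 𝒜, lam a' a • a' from heq a ha, Finset.smul_sum]
        refine AddSubgroup.sum_mem _ (fun a' ha' => ?_)
        rw [← mul_smul]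
        set μ := lam a' a with hμ
        have hrew : (MonoidAlgebra.single q (1:ℤ) * μ) • a'
            = ∑ q' ∈ μ.coeff.support, (μ.coeff q') • ((MonoidAlgebra.single (q * q') (1:ℤ) :
                MonoidAlgebra ℤ Q) • a') := by
          conv_lhs => rw [← MonoidAlgebra.sum_coeff_single μ]
          rw [Finsupp.sum, Finset.mul_sum, Finset.sum_smul]
          refine Finset.sum_congr rfl (fun q' hq' => ?_)
          rw [MonoidAlgebra.single_mul_single, one_mul]
          rw [show (MonoidAlgebra.single (q * q') (μ.coeff q') : MonoidAlgebra ℤ Q)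
              = (μ.coeff q') • MonoidAlgebra.single (q * q') (1:ℤ) by
            rw [MonoidAlgebra.smul_single]; simp]
          rw [smul_assoc]
        rw [hrew]
        refine AddSubgroup.sum_mem _ (fun q' hq' => ?_)
        refine AddSubgroup.zsmul_mem _ (ih (q * q') ?_ a' ha') _
        have h1 : ε ≤ χ q' := hεle a' ha' a ha q' hq'
        have h2 := hhom q q'
        push_cast at hq
        rw [h2]
        linarith
  have key2 : ∀ (l : MonoidAlgebra ℤ Q), ∀ a ∈ 𝒜, l • a ∈ H := by
    intro l
    induction l using MonoidAlgebra.induction with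
    | zero => intro a ha; rw [zero_smul]
              exact H.zero_mem
    | single_add q c f hqf hc ihf =>
      intro a ha
      rw [add_smul]
      refine H.add_mem ?_ (ihf a ha)
      have h1 : (MonoidAlgebra.single q c : MonoidAlgebra ℤ Q)
          = c • (MonoidAlgebra.single q (1:ℤ) : MonoidAlgebra ℤ Q) := by
        simp [MonoidAlgebra.smul_single]
      rw [h1, smul_assoc]
      refine AddSubgroup.zsmul_mem _ ?_ c
      obtain ⟨n, hn⟩ := exists_nat_ge ((-χ q) / ε)
      refine key n q ?_ a ha
      have := (div_le_iff₀ hε0).mp hn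
      linarith
  rw [eq_top_iff]
  intro x _
  have hx : x ∈ Submodule.span (MonoidAlgebra ℤ Q) (𝒜 : Set A) := by
    rw [hgen]; trivial
  rw [Submodule.mem_span_finset] at hx
  obtain ⟨f, -, hf⟩ := hx
  rw [← hf]
  exact AddSubgroup.sum_mem _ (fun a ha => key2 (f a) a ha)
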